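/- Trees are closed under insertion: let V₁, V₂ be disjoint finite sets with * ∈ V₁, and let t₁, t₂ be trees (connected acyclic simple graphs) on V₁, V₂ respectively. Then every graph in the support of t₁ ∘_* t₂ is a tree on (V₁ \ {*}) ∪ V₂. (This is the claim that the species of trees forms a suboperad of the graph insertion operad.) -/

import Mathlib

/-!
Common framework: a simple graph on a finite vertex set `V ⊆ α` is a finite set of
unordered pairs (`Sym2 α`) of distinct elements of `V`.  The insertion
`g₁ ∘_star g₂` is an element of the free `ℚ`-module `Finset (Sym2 α) →₀ ℚ`
on the set of edge sets.
-/

open scoped Classical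

variable {α : Type*} [DecidableEq α]

/-- The finite edge set `g` is a simple graph on the vertex set `V`. -/
def IsGraphOn (V : Finset α) (g : Finset (Sym2 α)) : Prop :=
  ∀ e ∈ g, ¬ e.IsDiag ∧ ∀ v ∈ e, v ∈ V

/-- The two endpoints of an unordered pair, as a `Finset`. -/
def sym2Finset : Sym2 α → Finset α :=
  Sym2.lift ⟨fun a b => {a, b}, by intro a b; simp [Finset.pair_comm]⟩

/-- Neighbours of `x` in the edge set `g`. -/
def nbrs (g : Finset (Sym2 α)) (x : α) : Finset α :=
  (g.biUnion sym2Finset).filter fun v => s(x, v) ∈ g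

/-- Remove the vertex `x` (and all incident edges) from the edge set `g`. -/
def delG (g : Finset (Sym2 α)) (x : α) : Finset (Sym2 α) :=
  g.filter fun e => x ∉ e

/-- The edges `{v, f v}` obtained from a reconnection map `f : C → V₂`. -/
def newEdges (C V₂ : Finset α) (f : {v // v ∈ C} → {w // w ∈ V₂}) : Finset (Sym2 α) :=
  Finset.univ.image fun v : {v // v ∈ C} => s(v.1, (f v).1)

/-- Insertion `g₁ ∘_star g₂` of a graph `g₂` on the vertex set `V₂` into a graph `g₁`:
the sum, over all maps `f` from the neighbours of `star` in `g₁` to `V₂`, of the graph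
obtained by deleting `star` from `g₁`, adding `g₂`, and reconnecting along `f`. -/
noncomputable def ins (V₂ : Finset α) (star : α) (g₁ g₂ : Finset (Sym2 α)) :
    Finset (Sym2 α) →₀ ℚ :=
  ∑ f : ({v // v ∈ nbrs g₁ star} → {w // w ∈ V₂}),
    Finsupp.single (delG g₁ star ∪ g₂ ∪ newEdges (nbrs g₁ star) V₂ f) 1

/-- Bilinear extension of the insertion to the free module on graphs. -/
noncomputable def insM (V₂ : Finset α) (star : α) (x y : Finset (Sym2 α) →₀ ℚ) :
    Finset (Sym2 α) →₀ ℚ :=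
  x.sum fun g₁ c₁ => y.sum fun g₂ c₂ => (c₁ * c₂) • ins V₂ star g₁ g₂

/-- The simple graph associated with an edge set. -/
def toSG (g : Finset (Sym2 α)) : SimpleGraph α where
  Adj x y := x ≠ y ∧ s(x, y) ∈ g
  symm := by
    constructor
    intro x y h
    exact ⟨h.1.symm, by rw [Sym2.eq_swap]; exact h.2⟩
  loopless := by
    constructor
    intro x h
    exact h.1 rfl

/-- The edge set `g` is connected on `V`: any two vertices of `V` are joined by a path. -/
def IsConnOn (V : Finset α) (g : Finset (Sym2 α)) : Prop :=
  ∀ x ∈ V, ∀ y ∈ V, (toSG g).Reachable x y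

/-- A tree on `V`: a connected acyclic simple graph on `V`. -/
def IsTreeOn (V : Finset α) (g : Finset (Sym2 α)) : Prop :=
  IsGraphOn V g ∧ IsConnOn V g ∧ (toSG g).IsAcyclic

lemma mem_sym2Finset {x : α} {e : Sym2 α} : x ∈ sym2Finset e ↔ x ∈ e := by
  induction e using Sym2.ind with
  | _ a b => simp [sym2Finset, Sym2.mem_iff]

lemma mem_nbrs {g : Finset (Sym2 α)} {x v : α} : v ∈ nbrs g x ↔ s(x, v) ∈ g := by
  constructor
  · intro h; exact (Finset.mem_filter.mp h).2
  · intro h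
    refine Finset.mem_filter.mpr ⟨Finset.mem_biUnion.mpr ⟨s(x, v), h, ?_⟩, h⟩
    exact mem_sym2Finset.mpr (by simp)

lemma toSG_mono {g g' : Finset (Sym2 α)} (h : g ⊆ g') : toSG g ≤ toSG g' :=
  fun _x _y hadj => ⟨hadj.1, h hadj.2⟩

lemma no_closed_trail {G : SimpleGraph α} (hG : G.IsAcyclic) {a : α} (w : G.Walk a a)
    (hne : w.edges ≠ []) (hnd : w.edges.Nodup) : False := by
  cases w with
  | nil => simp at hne
  | @cons _ b _ hab p =>
    have hbridge := (SimpleGraph.isAcyclic_iff_forall_adj_isBridge.mp hG) hab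
    rw [SimpleGraph.isBridge_iff_adj_and_forall_walk_mem_edges] at hbridge
    have hmem := hbridge p.reverse
    rw [SimpleGraph.Walk.edges_reverse, List.mem_reverse] at hmem
    rw [SimpleGraph.Walk.edges_cons, List.nodup_cons] at hnd
    exact hnd.1 hmem

/-- **Trees are closed under insertion**: if `t₁` and `t₂` are trees, every graph in the
support of `t₁ ∘_star t₂` is a tree on `(V₁ \ {star}) ∪ V₂`. -/
theorem trees_closed_under_insertion
    (V₁ V₂ : Finset α) (star : α)
    (hd : Disjoint V₁ V₂) (hstar : star ∈ V₁)
    (t₁ t₂ : Finset (Sym2 α))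
    (ht₁ : IsTreeOn V₁ t₁) (ht₂ : IsTreeOn V₂ t₂) :
    ∀ g ∈ (ins V₂ star t₁ t₂).support, IsTreeOn (V₁.erase star ∪ V₂) g := by
  obtain ⟨hg₁, hc₁, ha₁⟩ := ht₁
  obtain ⟨hg₂, hc₂, ha₂⟩ := ht₂
  intro g hg
  rw [ins] at hg
  obtain ⟨f, -, hf⟩ := Finsupp.mem_support_finset_sum g hg
  have hgeq : g = delG t₁ star ∪ t₂ ∪ newEdges (nbrs t₁ star) V₂ f :=
    Finset.mem_singleton.mp (Finsupp.support_single_subset hf)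
  subst hgeq
  set E : Finset (Sym2 α) := delG t₁ star ∪ t₂ ∪ newEdges (nbrs t₁ star) V₂ f with hE
  -- basic facts
  have hNV : ∀ v ∈ nbrs t₁ star, v ∈ V₁ ∧ v ≠ star := by
    intro v hv
    have he : s(star, v) ∈ t₁ := mem_nbrs.mp hv
    obtain ⟨hdiag, hmem⟩ := hg₁ _ he
    refine ⟨hmem v (by simp), fun h => hdiag ?_⟩
    rw [h]; simp [Sym2.mk_isDiag_iff]
  have hdisj : ∀ u ∈ V₁, u ∉ V₂ := fun u hu => Finset.disjoint_left.mp hd hu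
  have hEdel : delG t₁ star ⊆ E := (Finset.subset_union_left.trans Finset.subset_union_left)
  have hEt₂ : t₂ ⊆ E := (Finset.subset_union_right.trans Finset.subset_union_left)
  have hEnew : newEdges (nbrs t₁ star) V₂ f ⊆ E := Finset.subset_union_right
  have hclass : ∀ e ∈ E, e ∈ delG t₁ star ∨ e ∈ t₂ ∨
      ∃ v : {v // v ∈ nbrs t₁ star}, e = s(v.1, (f v).1) := by
    intro e he
    rcases Finset.mem_union.mp he with h | h
    · rcases Finset.mem_union.mp h with h' | h'
      · exact Or.inl h'
      · exact Or.inr (Or.inl h')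
    · obtain ⟨v, -, hv⟩ := Finset.mem_image.mp h
      exact Or.inr (Or.inr ⟨v, hv.symm⟩)
  -- Part 1 : graph on the union
  have hGraph : IsGraphOn (V₁.erase star ∪ V₂) E := by
    intro e he
    rcases hclass e he with h | h | ⟨v, rfl⟩
    · obtain ⟨hm, hs⟩ := Finset.mem_filter.mp h
      obtain ⟨hdiag, hmem⟩ := hg₁ e hm
      refine ⟨hdiag, fun u hu => Finset.mem_union_left _ (Finset.mem_erase.mpr ⟨?_, hmem u hu⟩)⟩
      rintro rfl; exact hs hu
    · obtain ⟨hdiag, hmem⟩ := hg₂ e h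
      exact ⟨hdiag, fun u hu => Finset.mem_union_right _ (hmem u hu)⟩
    · obtain ⟨hvV₁, hvs⟩ := hNV v.1 v.2
      have hfv := (f v).2
      have hne : v.1 ≠ (f v).1 := fun h => hdisj _ hvV₁ (h ▸ hfv)
      refine ⟨by simpa [Sym2.mk_isDiag_iff] using hne, ?_⟩
      intro u hu
      rcases Sym2.mem_iff.mp hu with rfl | rfl
      · exact Finset.mem_union_left _ (Finset.mem_erase.mpr ⟨hvs, hvV₁⟩)
      · exact Finset.mem_union_right _ hfv
  -- Part 2 : connectivity
  have aux : ∀ (x y : α) (w : (toSG t₁).Walk x y), y = star → x ≠ star →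
      ∃ z ∈ V₂, (toSG E).Reachable x z := by
    intro x y w
    induction w with
    | nil => intro h1 h2; exact absurd h1 h2
    | @cons a b c hab p ih =>
      intro hc' ha
      by_cases hb : b = star
      · have hmem : a ∈ nbrs t₁ star := mem_nbrs.mpr
          (by rw [Sym2.eq_swap, ← hb]; exact hab.2)
        set v : {v // v ∈ nbrs t₁ star} := ⟨a, hmem⟩ with hv
        have hEdge : s(a, (f v).1) ∈ E :=
          hEnew (Finset.mem_image.mpr ⟨v, Finset.mem_univ _, rfl⟩)
        have hne : a ≠ (f v).1 := fun h => hdisj _ (hNV a hmem).1 (h ▸ (f v).2)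
        exact ⟨(f v).1, (f v).2, (show (toSG E).Adj a (f v).1 from ⟨hne, hEdge⟩).reachable⟩
      · have hs : star ∉ s(a, b) := by
          intro h
          rcases Sym2.mem_iff.mp h with h' | h'
          · exact ha h'.symm
          · exact hb h'.symm
        have hEdge : s(a, b) ∈ delG t₁ star := Finset.mem_filter.mpr ⟨hab.2, hs⟩
        obtain ⟨z, hz, hr⟩ := ih hc' hb
        exact ⟨z, hz, ((show (toSG E).Adj a b from ⟨hab.1, hEdel hEdge⟩).reachable).trans hr⟩
  have hconn : IsConnOn (V₁.erase star ∪ V₂) E := by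
    have key : ∀ x ∈ V₁.erase star ∪ V₂, ∃ y ∈ V₂, (toSG E).Reachable x y := by
      intro x hx
      rcases Finset.mem_union.mp hx with hx | hx
      · obtain ⟨hxs, hxV⟩ := Finset.mem_erase.mp hx
        obtain ⟨w⟩ := hc₁ x hxV star hstar
        exact aux x star w rfl hxs
      · exact ⟨x, hx, SimpleGraph.Reachable.refl x⟩
    intro x hx y hy
    obtain ⟨zx, hzx, hrx⟩ := key x hx
    obtain ⟨zy, hzy, hry⟩ := key y hy
    have hmid := (hc₂ zx hzx zy hzy).mono (toSG_mono hEt₂)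
    exact (hrx.trans hmid).trans hry.symm
  -- Part 3 : acyclicity
  set π : α → α := fun u => if u ∈ V₂ then star else u with hπ
  have hπ₂ : ∀ u ∈ V₂, π u = star := fun u hu => if_pos hu
  have hπ₁ : ∀ u ∈ V₁, π u = u := fun u hu => if_neg (hdisj u hu)
  have hE_of_edge : ∀ e ∈ (toSG E).edgeSet, e ∈ E := by
    intro e he
    induction e using Sym2.ind with
    | _ a b => exact ((SimpleGraph.mem_edgeSet _).mp he).2
  have hkept : ∀ a b, (toSG E).Adj a b → (¬ ∀ u ∈ s(a, b), u ∈ V₂) →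
      (toSG t₁).Adj (π a) (π b) := by
    intro a b hab hk
    rcases hclass _ hab.2 with h | h | ⟨v, hv⟩
    · obtain ⟨hm, hs⟩ := Finset.mem_filter.mp h
      have hV := (hg₁ _ hm).2
      rw [hπ₁ a (hV a (by simp)), hπ₁ b (hV b (by simp))]
      exact ⟨hab.1, hm⟩
    · exact absurd (fun u hu => (hg₂ _ h).2 u hu) hk
    · obtain ⟨hvV₁, hvs⟩ := hNV v.1 v.2
      have hπv : π v.1 = v.1 := hπ₁ _ hvV₁
      have hπf : π (f v).1 = star := hπ₂ _ (f v).2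
      have hadj : (toSG t₁).Adj v.1 star :=
        ⟨hvs, by rw [Sym2.eq_swap]; exact mem_nbrs.mp v.2⟩
      rcases Sym2.eq_iff.mp hv with ⟨ha', hb'⟩ | ⟨ha', hb'⟩
      · rw [ha', hb', hπv, hπf]; exact hadj
      · rw [ha', hb', hπv, hπf]; exact hadj.symm
  have hdropt₂ : ∀ a b, (toSG E).Adj a b → (∀ u ∈ s(a, b), u ∈ V₂) → s(a, b) ∈ t₂ := by
    intro a b hab hk
    rcases hclass _ hab.2 with h | h | ⟨v, hv⟩
    · obtain ⟨hm, -⟩ := Finset.mem_filter.mp h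
      exact absurd (hk a (by simp)) (hdisj a ((hg₁ _ hm).2 a (by simp)))
    · exact h
    · exact absurd (hk v.1 (by rw [hv]; simp)) (hdisj _ (hNV v.1 v.2).1)
  have himg : ∀ e ∈ (toSG E).edgeSet, (¬ ∀ u ∈ e, u ∈ V₂) →
      (Sym2.map π e = e ∧ star ∉ e) ∨
      ∃ v : {v // v ∈ nbrs t₁ star}, e = s(v.1, (f v).1) ∧ Sym2.map π e = s(v.1, star) := by
    intro e he hk
    induction e using Sym2.ind with
    | _ a b =>
      have hab : (toSG E).Adj a b := (SimpleGraph.mem_edgeSet _).mp he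
      rcases hclass _ hab.2 with h | h | ⟨v, hv⟩
      · obtain ⟨hm, hs⟩ := Finset.mem_filter.mp h
        have hV := (hg₁ _ hm).2
        exact Or.inl ⟨by rw [Sym2.map_pair_eq, hπ₁ a (hV a (by simp)), hπ₁ b (hV b (by simp))], hs⟩
      · exact absurd (fun u hu => (hg₂ _ h).2 u hu) hk
      · refine Or.inr ⟨v, hv, ?_⟩
        rw [hv, Sym2.map_pair_eq, hπ₁ _ (hNV v.1 v.2).1, hπ₂ _ (f v).2]
  have hinj : ∀ e₁ ∈ (toSG E).edgeSet, ∀ e₂ ∈ (toSG E).edgeSet,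
      (¬ ∀ u ∈ e₁, u ∈ V₂) → (¬ ∀ u ∈ e₂, u ∈ V₂) →
      Sym2.map π e₁ = Sym2.map π e₂ → e₁ = e₂ := by
    intro e₁ h₁ e₂ h₂ hk₁ hk₂ heq
    rcases himg e₁ h₁ hk₁ with ⟨hm₁, hs₁⟩ | ⟨v₁, hv₁, hm₁⟩ <;>
      rcases himg e₂ h₂ hk₂ with ⟨hm₂, hs₂⟩ | ⟨v₂, hv₂, hm₂⟩
    · rw [← hm₁, ← hm₂, heq]
    · exfalso; rw [← hm₁, heq, hm₂] at hs₁; exact hs₁ (by simp)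
    · exfalso; rw [← hm₂, ← heq, hm₁] at hs₂; exact hs₂ (by simp)
    · rw [hm₁, hm₂] at heq
      have hvv : v₁.1 = v₂.1 := by
        rcases Sym2.eq_iff.mp heq with ⟨h', -⟩ | ⟨h', -⟩
        · exact h'
        · exact absurd h' (hNV v₁.1 v₁.2).2
      rw [hv₁, hv₂, Subtype.ext hvv]
  have hproj : ∀ {x y : α} (w : (toSG E).Walk x y), ∃ W : (toSG t₁).Walk (π x) (π y),
      W.edges = (w.edges.filter fun e => ¬ ∀ u ∈ e, u ∈ V₂).map (Sym2.map π) := by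
    intro x y w
    induction w with
    | nil => exact ⟨SimpleGraph.Walk.nil, by simp⟩
    | @cons a b c hab p ih =>
      obtain ⟨W, hW⟩ := ih
      by_cases hk : ∀ u ∈ s(a, b), u ∈ V₂
      · have hab' : π a = π b := by rw [hπ₂ a (hk a (by simp)), hπ₂ b (hk b (by simp))]
        refine ⟨W.copy hab'.symm rfl, ?_⟩
        rw [SimpleGraph.Walk.edges_copy, hW, SimpleGraph.Walk.edges_cons, List.filter_cons]
        simp [hk]
      · refine ⟨SimpleGraph.Walk.cons (hkept a b hab hk) W, ?_⟩
        have hk' : a ∉ V₂ ∨ b ∉ V₂ := by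
          by_cases h : a ∈ V₂
          · exact Or.inr ((show a ∈ V₂ → b ∉ V₂ by simpa using hk) h)
          · exact Or.inl h
        rw [SimpleGraph.Walk.edges_cons, SimpleGraph.Walk.edges_cons, hW, List.filter_cons]
        simp [hk, hk', Sym2.map_pair_eq]
  have hacyc : (toSG E).IsAcyclic := by
    intro v c hc
    have hnd : c.edges.Nodup := hc.edges_nodup
    have hnnil : c.edges ≠ [] := by
      have h3 := hc.three_le_length
      intro h
      rw [← SimpleGraph.Walk.length_edges, h] at h3
      simp at h3
    by_cases hall : ∀ e ∈ c.edges, ∀ u ∈ e, u ∈ V₂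
    · have hsub : ∀ e ∈ c.edges, e ∈ (toSG t₂).edgeSet := by
        intro e he
        have heE := c.edges_subset_edgeSet he
        induction e using Sym2.ind with
        | _ a b =>
          have hadj : (toSG E).Adj a b := (SimpleGraph.mem_edgeSet _).mp heE
          exact ⟨hadj.1, hdropt₂ a b hadj (hall _ he)⟩
      refine no_closed_trail ha₂ (c.transfer (toSG t₂) hsub) ?_ ?_ <;>
        rw [SimpleGraph.Walk.edges_transfer]
      · exact hnnil
      · exact hnd
    · push_neg at hall
      obtain ⟨e₀, he₀, u₀, hu₀, hu₀'⟩ := hall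
      have hk₀ : ¬ ∀ u ∈ e₀, u ∈ V₂ := fun h => hu₀' (h u₀ hu₀)
      obtain ⟨W, hW⟩ := hproj c
      refine no_closed_trail ha₁ W ?_ ?_
      · rw [hW]
        intro h
        rw [List.map_eq_nil_iff] at h
        exact (List.ne_nil_of_mem (List.mem_filter.mpr ⟨he₀, by simpa using hk₀⟩)) h
      · rw [hW]
        refine List.Nodup.map_on ?_ (hnd.filter _)
        intro e₁ h₁ e₂ h₂ heq
        obtain ⟨hm₁, hk₁⟩ := List.mem_filter.mp h₁
        obtain ⟨hm₂, hk₂⟩ := List.mem_filter.mp h₂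
        exact hinj e₁ (c.edges_subset_edgeSet hm₁) e₂ (c.edges_subset_edgeSet hm₂)
          (by simpa using hk₁) (by simpa using hk₂) heq
  exact ⟨hGraph, hconn, hacyc⟩
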